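/- Let γ ⊂ ℂ be a Jordan curve that is a k-quasicircle, and let f : γ → ℂ be continuous and injective. Suppose there is a constant C ≥ 1 such that for all x,y,z,w ∈ γ with z ≠ w: (1/C)·(|x−y|/|z−w|) ≤ |f(x)−f(y)|/|f(z)−f(w)| ≤ C·(|x−y|/|z−w|). Then f(γ) is a Jordan curve and f(γ) is a (C·k)-quasicircle. -/

import Mathlib

open Metric Set

noncomputable section

/-- The McMullen map `f_λ(z) = z^m + λ/z^l`. -/
def mcMullen (l m : ℕ) (lam : ℂ) (z : ℂ) : ℂ := z ^ m + lam / z ^ l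

/-- The "filled-in Julia set" `K_λ`: points whose forward orbit is defined
(never reaches `0`) and bounded. -/
def filledK (l m : ℕ) (lam : ℂ) : Set ℂ :=
  {z | (∀ n : ℕ, (mcMullen l m lam)^[n] z ≠ 0) ∧
    ∃ M : ℝ, ∀ n : ℕ, ‖(mcMullen l m lam)^[n] z‖ ≤ M}

/-- The trace on `ℂ` of the attracting basin of `∞`. -/
def basinA (l m : ℕ) (lam : ℂ) : Set ℂ := (filledK l m lam)ᶜ

/-- The Julia set `J_λ = ∂A_λ`. -/
def juliaJ (l m : ℕ) (lam : ℂ) : Set ℂ := frontier (basinA l m lam)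

/-- The free critical points of `f_λ`: the `l+m` solutions of `ω^(l+m) = λl/m`. -/
def freeCrit (l m : ℕ) (lam : ℂ) : Set ℂ := {w | w ^ (l + m) = lam * l / m}

/-- `B_λ`: the (unique) unbounded connected component of `A_λ`, realized as the set of
points of `A_λ` whose connected component in `A_λ` is unbounded. -/
def basinB (l m : ℕ) (lam : ℂ) : Set ℂ :=
  {z | z ∈ basinA l m lam ∧ ¬ Bornology.IsBounded (connectedComponentIn (basinA l m lam) z)}

/-- `T_λ`: the connected component of `A_λ` containing `0`. -/
def basinT (l m : ℕ) (lam : ℂ) : Set ℂ := connectedComponentIn (basinA l m lam) 0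

/-- Two metric spaces are quasisymmetrically equivalent: there is a homeomorphism `h`
and a homeomorphic distortion control `η : [0,∞) → [0,∞)` with
`d(h x, h y) ≤ η(d(x,y)/d(x,z)) * d(h x, h z)` for all `x ≠ z`. -/
def QSEquiv (X Y : Type*) [MetricSpace X] [MetricSpace Y] : Prop :=
  ∃ (h : X ≃ₜ Y) (η : NNReal ≃ₜ NNReal), ∀ x y z : X, x ≠ z →
    nndist (h x) (h y) ≤ η (nndist x y / nndist x z) * nndist (h x) (h z)

/-- The sets `I_n` in the construction of the standard Cantor set `C_{l,m}`. -/
def cantorPre (l m : ℕ) : ℕ → Set ℝ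
  | 0 => Icc 0 1
  | n + 1 => (fun x : ℝ => (1 - x) / (l : ℝ)) '' cantorPre l m n ∪
      (fun x : ℝ => 1 + (x - 1) / (m : ℝ)) '' cantorPre l m n

/-- The standard Cantor set `C_{l,m}`. -/
def stdCantorSet (l m : ℕ) : Set ℝ := ⋂ n, cantorPre l m n

/-- The standard Cantor circles `A_{l,m} = C_{l,m} × S¹`, with the product metric. -/
abbrev cantorCircles (l m : ℕ) := ↥(stdCantorSet l m) × ↥(sphere (0 : ℂ) 1)

/-- A Jordan curve in `ℂ`: a homeomorphic image of the unit circle. -/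
def IsJordanCurve (Γ : Set ℂ) : Prop := Nonempty (↥(sphere (0 : ℂ) 1) ≃ₜ ↥Γ)

/-- A `k`-quasicircle: a Jordan curve such that for any two distinct points `x, y` on it,
at least one of the connected components of `Γ \ {x, y}` has diameter at most `k * dist x y`. -/
def IsQuasicircle (k : ℝ) (Γ : Set ℂ) : Prop :=
  IsJordanCurve Γ ∧ ∀ x ∈ Γ, ∀ y ∈ Γ, x ≠ y →
    ∃ z ∈ Γ \ {x, y}, diam (connectedComponentIn (Γ \ {x, y}) z) ≤ k * dist x y

/-- A Sierpiński carpet in `ℂ`. -/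
def IsSierpinskiCarpet (S : Set ℂ) : Prop :=
  IsCompact S ∧ IsConnected S ∧ LocallyConnectedSpace S ∧ interior S = ∅ ∧
  (∀ z ∈ Sᶜ, IsJordanCurve (frontier (connectedComponentIn Sᶜ z))) ∧
  (∀ z ∈ Sᶜ, ∀ w ∈ Sᶜ, connectedComponentIn Sᶜ z ≠ connectedComponentIn Sᶜ w →
    frontier (connectedComponentIn Sᶜ z) ∩ frontier (connectedComponentIn Sᶜ w) = ∅) ∧
  ∀ ε : ℝ, 0 < ε →
    {C : Set ℂ | (∃ z ∈ Sᶜ, C = connectedComponentIn Sᶜ z) ∧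
      ε < diam (frontier C)}.Finite

/-- A round Sierpiński carpet: all peripheral circles are Euclidean circles. -/
def IsRoundCarpet (S : Set ℂ) : Prop :=
  IsSierpinskiCarpet S ∧
  ∀ z ∈ Sᶜ, ∃ (c : ℂ) (r : ℝ), 0 < r ∧ frontier (connectedComponentIn Sᶜ z) = sphere c r

/-- `λ₀`: supremum of the positive real parameters in the McMullen domain
(where `J_λ` is a Cantor set of circles). -/
def mcMullenLam0 (l m : ℕ) : ℝ :=
  sSup {t : ℝ | 0 < t ∧ Nonempty (↥(juliaJ l m (t : ℂ)) ≃ₜ cantorCircles 3 3)}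

/-- `λ₁`: infimum of the positive real parameters in the Cantor locus
(where `J_λ` is a Cantor set). -/
def mcMullenLam1 (l m : ℕ) : ℝ :=
  sInf {t : ℝ | 0 < t ∧ Nonempty (↥(juliaJ l m (t : ℂ)) ≃ₜ ↥(stdCantorSet 3 3))}

/-- If `γ` is a `k`-quasicircle and `f` is continuous and injective on `γ`
with two-sided distortion bound `C` on ratios of distances, then `f(γ)` is a Jordan curve
and a `C·k`-quasicircle. -/
theorem stmt4 (k : ℝ) (hk : 1 ≤ k) (γ : Set ℂ) (hγ : IsQuasicircle k γ)
    (C : ℝ) (hC : 1 ≤ C) (f : ℂ → ℂ)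
    (hcont : ContinuousOn f γ) (hinj : InjOn f γ)
    (hdist : ∀ x ∈ γ, ∀ y ∈ γ, ∀ z ∈ γ, ∀ w ∈ γ, z ≠ w →
      (1 / C) * (dist x y / dist z w) ≤ dist (f x) (f y) / dist (f z) (f w) ∧
      dist (f x) (f y) / dist (f z) (f w) ≤ C * (dist x y / dist z w)) :
    IsJordanCurve (f '' γ) ∧ IsQuasicircle (C * k) (f '' γ) := by
  classical
  obtain ⟨eγ⟩ := hγ.1
  haveI : CompactSpace ↥(sphere (0:ℂ) 1) := isCompact_iff_compactSpace.mp (isCompact_sphere 0 1)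
  haveI : CompactSpace ↥γ := eγ.compactSpace
  have hγc : IsCompact γ := isCompact_iff_compactSpace.mpr ‹_›
  -- the equivalence γ ≃ f '' γ
  let e : ↥γ ≃ ↥(f '' γ) := Equiv.Set.imageOfInjOn f γ hinj
  have hec : Continuous e := by
    apply Continuous.subtype_mk
    exact continuousOn_iff_continuous_restrict.mp hcont
  let h : ↥γ ≃ₜ ↥(f '' γ) := hec.homeoOfEquivCompactToT2
  have hJordan : IsJordanCurve (f '' γ) := ⟨eγ.trans h⟩
  -- inverse function
  let g : ℂ → ℂ := fun w => if hw : w ∈ f '' γ then (h.symm ⟨w, hw⟩ : ℂ) else 0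
  have hgf : ∀ u ∈ γ, g (f u) = u := by
    intro u hu
    have h1 : h ⟨u, hu⟩ = ⟨f u, mem_image_of_mem f hu⟩ := rfl
    have h2 : h.symm ⟨f u, mem_image_of_mem f hu⟩ = ⟨u, hu⟩ := by
      rw [← h1, Homeomorph.symm_apply_apply]
    simp only [g, dif_pos (mem_image_of_mem f hu)]
    rw [h2]
  have hfg : ∀ w ∈ f '' γ, f (g w) = w := by
    rintro w ⟨u, hu, rfl⟩
    rw [hgf u hu]
  have hgmem : ∀ w ∈ f '' γ, g w ∈ γ := by
    rintro w ⟨u, hu, rfl⟩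
    rw [hgf u hu]; exact hu
  have hgcont : ContinuousOn g (f '' γ) := by
    rw [continuousOn_iff_continuous_restrict]
    have : (f '' γ).domRestrict g = fun w => (h.symm w : ℂ) := by
      funext w
      simp only [Set.domRestrict, g, dif_pos w.2]
    rw [this]
    exact continuous_subtype_val.comp h.symm.continuous
  refine ⟨hJordan, hJordan, ?_⟩
  rintro x' hx' y' hy' hxy'
  obtain ⟨x, hx, rfl⟩ := hx'
  obtain ⟨y, hy, rfl⟩ := hy'
  have hxy : x ≠ y := fun hxx => hxy' (by rw [hxx])
  obtain ⟨z, hz, hzd⟩ := hγ.2 x hx y hy hxy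
  have hzγ : z ∈ γ := hz.1
  have hfz : f z ∈ f '' γ \ {f x, f y} := by
    refine ⟨mem_image_of_mem f hzγ, ?_⟩
    have hz2 := hz.2
    simp only [mem_insert_iff, mem_singleton_iff, not_or] at hz2 ⊢
    exact ⟨fun hc => hz2.1 (hinj hzγ hx hc), fun hc => hz2.2 (hinj hzγ hy hc)⟩
  refine ⟨f z, hfz, ?_⟩
  set T := connectedComponentIn (f '' γ \ {f x, f y}) (f z) with hT
  set K := connectedComponentIn (γ \ {x, y}) z with hK
  have hTsub : T ⊆ f '' γ \ {f x, f y} := connectedComponentIn_subset _ _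
  have hKsub : K ⊆ γ \ {x, y} := connectedComponentIn_subset _ _
  -- g '' T ⊆ K
  have hgT : g '' T ⊆ K := by
    have hTconn : IsConnected T := (isConnected_connectedComponentIn_iff).mpr hfz
    have hgTconn : IsConnected (g '' T) :=
      hTconn.image g (hgcont.mono (fun w hw => (hTsub hw).1))
    have hgTsub : g '' T ⊆ γ \ {x, y} := by
      rintro _ ⟨w, hw, rfl⟩
      have hw1 := hTsub hw
      have hwγ : g w ∈ γ := hgmem w hw1.1
      refine ⟨hwγ, ?_⟩
      have hw2 := hw1.2
      simp only [mem_insert_iff, mem_singleton_iff, not_or] at hw2 ⊢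
      constructor
      · intro hc; exact hw2.1 (by rw [← hfg w hw1.1, hc])
      · intro hc; exact hw2.2 (by rw [← hfg w hw1.1, hc])
    have hzT : z ∈ g '' T := by
      refine ⟨f z, mem_connectedComponentIn hfz, hgf z hzγ⟩
    exact hgTconn.isPreconnected.subset_connectedComponentIn hzT hgTsub
  -- distances
  have hdxy : 0 < dist x y := dist_pos.mpr hxy
  have hdfxy : 0 < dist (f x) (f y) :=
    dist_pos.mpr fun hc => hxy (hinj hx hy hc)
  have hKbdd : Bornology.IsBounded K :=
    (hγc.isBounded.subset (fun a ha => (hKsub ha).1))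
  have hbound : ∀ a ∈ T, ∀ b ∈ T, dist a b ≤ C * k * dist (f x) (f y) := by
    intro a ha b hb
    have haγ : a ∈ f '' γ := (hTsub ha).1
    have hbγ : b ∈ f '' γ := (hTsub hb).1
    have hgaK : g a ∈ K := hgT ⟨a, ha, rfl⟩
    have hgbK : g b ∈ K := hgT ⟨b, hb, rfl⟩
    have hgab : dist (g a) (g b) ≤ k * dist x y := by
      calc dist (g a) (g b) ≤ diam K := dist_le_diam_of_mem hKbdd hgaK hgbK
        _ ≤ k * dist x y := hzd
    have hgaγ : g a ∈ γ := (hKsub hgaK).1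
    have hgbγ : g b ∈ γ := (hKsub hgbK).1
    have hr := (hdist (g a) hgaγ (g b) hgbγ x hx y hy hxy).2
    rw [hfg a haγ, hfg b hbγ] at hr
    have h1 : dist a b ≤ C * (dist (g a) (g b) / dist x y) * dist (f x) (f y) :=
      (div_le_iff₀ hdfxy).mp hr
    calc dist a b ≤ C * (dist (g a) (g b) / dist x y) * dist (f x) (f y) := h1
      _ ≤ C * k * dist (f x) (f y) := by
          apply mul_le_mul_of_nonneg_right _ dist_nonneg
          apply mul_le_mul_of_nonneg_left _ (le_trans zero_le_one hC)
          exact (div_le_iff₀ hdxy).mpr hgab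
  exact diam_le_of_forall_dist_le
    (mul_nonneg (mul_nonneg (le_trans zero_le_one hC) (le_trans zero_le_one hk))
      dist_nonneg) hbound

end
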